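/- Let n ≥ 2 and 2 ≤ M ≤ n be integers, and set μ = ⌊M/2⌋. There exists a family of M-element subsets (blocks) of {1,…,n} of size at most C(⌈n/μ⌉, 2) such that every 2-element subset of {1,…,n} is contained in at least one block. -/

import Mathlib

theorem covering_design_exists (n M : ℕ) (hn : 2 ≤ n) (hM : 2 ≤ M) (hMn : M ≤ n)
    (μ : ℕ) (hμ : μ = M / 2) :
    ∃ F : Finset (Finset (Fin n)),
      F.card ≤ Nat.choose ((n + μ - 1) / μ) 2 ∧
      (∀ b ∈ F, b.card = M) ∧
      (∀ j k : Fin n, j ≠ k → ∃ b ∈ F, j ∈ b ∧ k ∈ b) := by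
  have hμpos : 0 < μ := by omega
  set m := (n + μ - 1) / μ with hm
  have hm' : m = (n - 1) / μ + 1 := by
    have h1 : n + μ - 1 = (n - 1) + μ := by omega
    rw [hm, h1, Nat.add_div_right _ hμpos]
  have hμn : μ ≤ n - 1 := by omega
  have hm2 : 2 ≤ m := by
    have : 1 ≤ (n - 1) / μ := (Nat.one_le_div_iff hμpos).2 hμn
    omega
  have hgrp : ∀ i : Fin n, (i : ℕ) / μ < m := by
    intro i
    have h1 : (i : ℕ) ≤ n - 1 := by have := i.isLt; omega
    have : (i : ℕ) / μ ≤ (n - 1) / μ := Nat.div_le_div_right h1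
    omega
  set base : Finset ℕ → Finset (Fin n) :=
    fun p => Finset.univ.filter (fun i => (i : ℕ) / μ ∈ p) with hbasedef
  have hgcard : ∀ g : ℕ,
      (Finset.univ.filter (fun i : Fin n => (i : ℕ) / μ = g)).card ≤ μ := by
    intro g
    refine le_trans (Finset.card_le_card_of_injOn (fun i : Fin n => (i : ℕ) % μ)
      ?_ ?_) (le_of_eq (Finset.card_range μ))
    · intro i _; simpa using Nat.mod_lt _ hμpos
    · intro a ha b hb hab
      simp only [Finset.coe_filter, Finset.mem_univ, true_and, Set.mem_setOf_eq] at ha hb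
      have hab' : (a : ℕ) % μ = (b : ℕ) % μ := hab
      apply Fin.ext
      rw [← Nat.div_add_mod (a : ℕ) μ, ← Nat.div_add_mod (b : ℕ) μ, ha, hb, hab']
  have hbase : ∀ p : Finset ℕ, p.card = 2 → (base p).card ≤ M := by
    intro p hp
    have hsub : base p ⊆ p.biUnion
        (fun g => Finset.univ.filter (fun i : Fin n => (i : ℕ) / μ = g)) := by
      intro i hi
      simp only [hbasedef, Finset.mem_filter, Finset.mem_univ, true_and] at hi
      simp only [Finset.mem_biUnion, Finset.mem_filter, Finset.mem_univ, true_and]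
      exact ⟨_, hi, rfl⟩
    calc (base p).card ≤ _ := Finset.card_le_card hsub
      _ ≤ ∑ g ∈ p, (Finset.univ.filter (fun i : Fin n => (i : ℕ) / μ = g)).card :=
        Finset.card_biUnion_le
      _ ≤ ∑ g ∈ p, μ := Finset.sum_le_sum (fun g _ => hgcard g)
      _ = 2 * μ := by rw [Finset.sum_const, hp]; ring
      _ ≤ M := by omega
  have hex : ∀ p : Finset ℕ, ∃ b : Finset (Fin n),
      p.card = 2 → base p ⊆ b ∧ b.card = M := by
    intro p
    by_cases hp : p.card = 2
    · obtain ⟨b, hb1, hb2⟩ := Finset.exists_superset_card_eq (hbase p hp)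
        (by simpa using hMn)
      exact ⟨b, fun _ => ⟨hb1, hb2⟩⟩
    · exact ⟨∅, fun h => absurd h hp⟩
  choose f hf using hex
  refine ⟨((Finset.range m).powersetCard 2).image f, ?_, ?_, ?_⟩
  · calc _ ≤ ((Finset.range m).powersetCard 2).card := Finset.card_image_le
      _ = Nat.choose m 2 := by rw [Finset.card_powersetCard, Finset.card_range]
  · intro b hb
    simp only [Finset.mem_image, Finset.mem_powersetCard] at hb
    obtain ⟨p, ⟨_, hp2⟩, rfl⟩ := hb
    exact (hf p hp2).2
  · intro j k hjk
    set g := (j : ℕ) / μ with hg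
    set g' := (k : ℕ) / μ with hg'
    by_cases hgg : g = g'
    · obtain ⟨g'', hne, hlt⟩ : ∃ g'', g ≠ g'' ∧ g'' < m := by
        by_cases h0 : g = 0
        · exact ⟨1, by omega, by omega⟩
        · exact ⟨0, h0, by omega⟩
      have hmem : ({g, g''} : Finset ℕ) ∈ (Finset.range m).powersetCard 2 := by
        rw [Finset.mem_powersetCard]
        constructor
        · intro x hx
          simp only [Finset.mem_insert, Finset.mem_singleton] at hx
          rcases hx with rfl | rfl
          · exact Finset.mem_range.2 (hgrp j)
          · exact Finset.mem_range.2 hlt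
        · exact Finset.card_pair hne
      refine ⟨f {g, g''}, Finset.mem_image_of_mem f hmem, ?_, ?_⟩
      · exact (hf _ (Finset.card_pair hne)).1 (by simp [hbasedef, hg])
      · refine (hf _ (Finset.card_pair hne)).1 ?_
        simp only [hbasedef, Finset.mem_filter, Finset.mem_univ, true_and,
          Finset.mem_insert, Finset.mem_singleton]
        exact Or.inl (hgg.trans hg').symm
    · have hmem : ({g, g'} : Finset ℕ) ∈ (Finset.range m).powersetCard 2 := by
        rw [Finset.mem_powersetCard]
        constructor
        · intro x hx
          simp only [Finset.mem_insert, Finset.mem_singleton] at hx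
          rcases hx with rfl | rfl
          · exact Finset.mem_range.2 (hgrp j)
          · exact Finset.mem_range.2 (hgrp k)
        · exact Finset.card_pair hgg
      refine ⟨f {g, g'}, Finset.mem_image_of_mem f hmem, ?_, ?_⟩
      · exact (hf _ (Finset.card_pair hgg)).1 (by simp [hbasedef, hg])
      · exact (hf _ (Finset.card_pair hgg)).1 (by simp [hbasedef, hg'])
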